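/- Let M be a maximum matching in a bipartite graph G and suppose request r is unmatched in M. Let G' be a subgraph of G (on the same vertex set) containing M. Then in G' there is no matching that matches r together with all requests matched by M. Consequently, if matching previously matched requests is strictly prioritized, r remains unmatched in any priority-optimal matching of G'. -/
import Mathlib


/-- A matching: finite, pairwise vertex-disjoint set of edges of `E`. -/
def IsMatching {R V : Type*} (E : R → V → Prop) (M : Finset (R × V)) : Prop :=
  (∀ p ∈ M, E p.1 p.2) ∧
  (∀ p ∈ M, ∀ q ∈ M, p ≠ q → p.1 ≠ q.1 ∧ p.2 ≠ q.2)

/-- Request `a` is covered (matched) by matching `M`. -/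
def Covered {R V : Type*} (M : Finset (R × V)) (a : R) : Prop := ∃ v, (a, v) ∈ M

lemma covered_set_eq {R V : Type*} [DecidableEq R] (M : Finset (R × V)) :
    {a | Covered M a} = ↑(M.image Prod.fst) := by
  ext a
  simp only [Set.mem_setOf_eq, Finset.coe_image, Set.mem_image, Finset.mem_coe, Covered]
  constructor
  · rintro ⟨v, hv⟩; exact ⟨(a, v), hv, rfl⟩
  · rintro ⟨p, hp, rfl⟩; exact ⟨p.2, hp⟩

lemma card_image_fst {R V : Type*} [DecidableEq R] {E : R → V → Prop} {M : Finset (R × V)}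
    (hM : IsMatching E M) : (M.image Prod.fst).card = M.card := by
  apply Finset.card_image_of_injOn
  intro p hp q hq hpq
  by_contra h
  exact (hM.2 p hp q hq h).1 hpq

lemma covered_ncard {R V : Type*} [Fintype R] [DecidableEq R] {E : R → V → Prop} {M : Finset (R × V)}
    (hM : IsMatching E M) : {a | Covered M a}.ncard = M.card := by
  rw [covered_set_eq, Set.ncard_coe_finset, card_image_fst hM]

/-- if `M` is a maximum matching of `G` not covering `r`, and
`G' ⊇ M` is a subgraph of `G`, then `G'` has no matching covering `r`
together with all `M`-covered requests; consequently, any priority-optimal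
matching of `G'` (maximize coverage of `M`-covered requests first, then total
coverage) leaves `r` unmatched. -/
theorem unmatched_stays_unmatched
    {R V : Type*} [Fintype R] [Fintype V]
    (E E' : R → V → Prop)                -- edge sets of G and G'
    (M : Finset (R × V))
    (hM : IsMatching E M)
    (hmax : ∀ M' : Finset (R × V), IsMatching E M' → M'.card ≤ M.card)
    (r : R) (hr : ¬ Covered M r)
    (hME' : ∀ p ∈ M, E' p.1 p.2)         -- M ⊆ E'
    (hE'E : ∀ a v, E' a v → E a v)       -- E' ⊆ E
    :
    (¬ ∃ M' : Finset (R × V), IsMatching E' M' ∧ Covered M' r ∧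
        ∀ a, Covered M a → Covered M' a) ∧
    (∀ M' : Finset (R × V),
      IsMatching E' M' →
      -- M' maximizes the number of M-covered requests it covers:
      (∀ M'' : Finset (R × V), IsMatching E' M'' →
        {a | Covered M a ∧ Covered M'' a}.ncard ≤ {a | Covered M a ∧ Covered M' a}.ncard) →
      -- and subject to that, the total number of covered requests:
      (∀ M'' : Finset (R × V), IsMatching E' M'' →
        {a | Covered M a ∧ Covered M'' a}.ncard = {a | Covered M a ∧ Covered M' a}.ncard →
        {a | Covered M'' a}.ncard ≤ {a | Covered M' a}.ncard) →
      ¬ Covered M' r) := by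
  classical
  have part1 : ¬ ∃ M' : Finset (R × V), IsMatching E' M' ∧ Covered M' r ∧
      ∀ a, Covered M a → Covered M' a := by
    rintro ⟨M', hM', hrM', hcov⟩
    have hM'E : IsMatching E M' := ⟨fun p hp => hE'E p.1 p.2 (hM'.1 p hp), hM'.2⟩
    -- insert r ∪ covered M ⊆ image fst M'
    have hsub : insert r (M.image Prod.fst) ⊆ M'.image Prod.fst := by
      intro a ha
      rcases Finset.mem_insert.mp ha with rfl | ha
      · obtain ⟨v, hv⟩ := hrM'
        exact Finset.mem_image.mpr ⟨(a, v), hv, rfl⟩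
      · obtain ⟨p, hp, rfl⟩ := Finset.mem_image.mp ha
        obtain ⟨v, hv⟩ := hcov p.1 ⟨p.2, hp⟩
        exact Finset.mem_image.mpr ⟨(p.1, v), hv, rfl⟩
    have hrnot : r ∉ M.image Prod.fst := by
      intro h
      obtain ⟨p, hp, rfl⟩ := Finset.mem_image.mp h
      exact hr ⟨p.2, hp⟩
    have := Finset.card_le_card hsub
    rw [Finset.card_insert_of_notMem hrnot, card_image_fst hM, card_image_fst hM'E] at this
    have := hmax M' hM'E
    omega
  refine ⟨part1, fun M' hM' hopt1 _ hrM' => ?_⟩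
  apply part1
  refine ⟨M', hM', hrM', ?_⟩
  have hMmatch' : IsMatching E' M := ⟨hME', hM.2⟩
  have h1 := hopt1 M hMmatch'
  have hset : {a | Covered M a ∧ Covered M a} = {a | Covered M a} := by ext a; simp [and_self]
  rw [hset, covered_ncard hM] at h1
  have hset2 : ∀ N : Finset (R × V),
      {a | Covered M a ∧ Covered N a} = ↑(M.image Prod.fst ∩ N.image Prod.fst) := by
    intro N
    ext a
    simp only [Set.mem_setOf_eq, Finset.coe_inter, Set.mem_inter_iff, ← covered_set_eq,
      Set.mem_setOf_eq]
  rw [hset2 M', Set.ncard_coe_finset] at h1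
  have hle : M.image Prod.fst ⊆ M'.image Prod.fst := by
    have heq : M.image Prod.fst ∩ M'.image Prod.fst = M.image Prod.fst := by
      apply Finset.eq_of_subset_of_card_le (Finset.inter_subset_left)
      rw [card_image_fst hM]; exact h1
    intro a ha
    have h2 : a ∈ M.image Prod.fst ∩ M'.image Prod.fst := heq.symm ▸ ha
    exact (Finset.mem_inter.mp h2).2
  intro a ⟨v, hv⟩
  have : a ∈ M'.image Prod.fst := hle (Finset.mem_image.mpr ⟨(a, v), hv, rfl⟩)
  obtain ⟨p, hp, rfl⟩ := Finset.mem_image.mp this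
  exact ⟨p.2, hp⟩
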